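/- arXiv:1910.13870 — 3 statements merged into one kernel-verified Lean document; each statement's English description precedes it below -/
import Mathlib

section
/- Let u : Ω → ℝ be convex and bounded, and assume that Ω* := ∂u(Ω) is a bounded subset of ℝ^d. Then closure(Ω*) ⊆ χ_u(Ω̄) ⊆ χ_u(ℝ^d) ⊆ convexHull(closure(Ω*)). -/
open Set MeasureTheory Filter Topology

noncomputable section

abbrev Euc (d : ℕ) := EuclideanSpace ℝ (Fin d)

/-- Subdifferential of `v` at `x` relative to the set `C`. -/
def subdiff {d : ℕ} (C : Set (Euc d)) (v : Euc d → ℝ) (x : Euc d) : Set (Euc d) :=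
  {p | ∀ y ∈ C, v x + (inner ℝ p (y - x) : ℝ) ≤ v y}

/-- `⋃ x ∈ S, subdiff C v x`. -/
def subdiffSet {d : ℕ} (C : Set (Euc d)) (v : Euc d → ℝ) (S : Set (Euc d)) : Set (Euc d) :=
  ⋃ x ∈ S, subdiff C v x

/-- The convex extension `ũ` of `u : Ω → ℝ` (may take the value `+∞`, hence `EReal`). -/
def extFun {d : ℕ} (Ω : Set (Euc d)) (u : Euc d → ℝ) (x : Euc d) : EReal :=
  ⨆ y ∈ Ω, ⨆ q ∈ subdiff Ω u y, ((u y + (inner ℝ q (x - y) : ℝ) : ℝ) : EReal)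

/-- `χ_u(x)`: the subdifferential of the extension `ũ` at `x`. -/
def chiSub {d : ℕ} (Ω : Set (Euc d)) (u : Euc d → ℝ) (x : Euc d) : Set (Euc d) :=
  {p | ∀ z : Euc d, extFun Ω u x + (((inner ℝ p (z - x) : ℝ) : ℝ) : EReal) ≤ extFun Ω u z}

def chiSubSet {d : ℕ} (Ω : Set (Euc d)) (u : Euc d → ℝ) (S : Set (Euc d)) : Set (Euc d) :=
  ⋃ x ∈ S, chiSub Ω u x

/-- The lattice `hℤ^d`. -/
def latt (d : ℕ) (h : ℝ) : Set (Euc d) := {x | ∀ i, ∃ m : ℤ, x i = m * h}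

/-- `Ω_h = Ω ∩ hℤ^d`. -/
def meshΩ {d : ℕ} (Ω : Set (Euc d)) (h : ℝ) : Set (Euc d) := Ω ∩ latt d h

/-- An integer direction `e ∈ ℤ^d` as a vector of `ℝ^d`. -/
def intVec {d : ℕ} (e : Fin d → ℤ) : Euc d :=
  (EuclideanSpace.equiv (Fin d) ℝ).symm (fun i => (e i : ℝ))

/-- `h^e_x = sup { r h : r ∈ [0,1], x + r h e ∈ closure Ω }`. -/
def hev {d : ℕ} (Ω : Set (Euc d)) (h : ℝ) (x : Euc d) (e : Fin d → ℤ) : ℝ :=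
  sSup {t | ∃ r ∈ Icc (0:ℝ) 1, t = r * h ∧ x + (r * h) • intVec e ∈ closure Ω}

/-- The boundary nodes `∂Ω_h` for the direction set `V`. -/
def meshBd {d : ℕ} (Ω : Set (Euc d)) (h : ℝ) (V : Set (Fin d → ℤ)) : Set (Euc d) :=
  {x ∈ frontier Ω | ∃ y ∈ meshΩ Ω h, ∃ e ∈ V, x = y + hev Ω h y e • intVec e}

/-- The convex envelope of `u` with constraints on `N`:
`Γ(u)(x) = sup {L x : L affine, L ≤ u on N}`. -/
def convEnv {d : ℕ} (N : Set (Euc d)) (u : Euc d → ℝ) (x : Euc d) : ℝ :=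
  sSup {t | ∃ (p : Euc d) (c : ℝ),
    (∀ y ∈ N, (inner ℝ p y : ℝ) + c ≤ u y) ∧ t = (inner ℝ p x : ℝ) + c}

/-- The second difference operator `Δ_e u_h (x)`. -/
def deltaE {d : ℕ} (Ω : Set (Euc d)) (h : ℝ) (u : Euc d → ℝ) (e : Fin d → ℤ)
    (x : Euc d) : ℝ :=
  2 / (hev Ω h x e + hev Ω h x (-e)) *
    ((u (x + hev Ω h x e • intVec e) - u x) / hev Ω h x e +
     (u (x + hev Ω h x (-e) • intVec (-e)) - u x) / hev Ω h x (-e))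

/-- Discrete convexity with the full set of directions `e ∈ ℤ^d \ {0}`. -/
def DiscConvex {d : ℕ} (Ω : Set (Euc d)) (h : ℝ) (u : Euc d → ℝ) : Prop :=
  ∀ x ∈ meshΩ Ω h, ∀ e : Fin d → ℤ, e ≠ 0 → 0 ≤ deltaE Ω h u e x


-- helper 1
lemma le_extFun {d : ℕ} {Ω : Set (Euc d)} {u : Euc d → ℝ} {y q : Euc d}
    (hy : y ∈ Ω) (hq : q ∈ subdiff Ω u y) (x : Euc d) :
    ((u y + (inner ℝ q (x - y) : ℝ) : ℝ) : EReal) ≤ extFun Ω u x := by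
  unfold extFun
  exact le_iSup₂_of_le y hy (le_iSup₂_of_le q hq le_rfl)

-- helper 2 : sum over an extension
lemma sum_extend_zero {ι : Type*} [Fintype ι] {n : ℕ} {M : Type*} [AddCommMonoid M]
    (e : ι ↪ Fin n) (g : ι → M) :
    ∑ j, Function.extend e g (fun _ => 0) j = ∑ i, g i := by
  classical
  have h1 : ∑ j ∈ Finset.univ.image e, Function.extend e g (fun _ => 0) j
      = ∑ j, Function.extend e g (fun _ => 0) j := by
    apply Finset.sum_subset (Finset.subset_univ _)
    intro j _ hj
    have h2 : ¬ ∃ i, e i = j := by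
      intro ⟨i, hi⟩; exact hj (Finset.mem_image.mpr ⟨i, Finset.mem_univ i, hi⟩)
    rw [Function.extend_apply' g (fun _ => 0) j h2]
  rw [← h1, Finset.sum_image (fun i _ j _ h => e.injective h)]
  exact Finset.sum_congr rfl fun i _ => e.injective.extend_apply g (fun _ => 0) i

-- helper 3 : compact convex hull
lemma isCompact_convexHull' {d : ℕ} {s : Set (Euc d)} (hK : IsCompact s) :
    IsCompact (convexHull ℝ s) := by
  classical
  set T : (Fin (d+1) → ℝ) × (Fin (d+1) → Euc d) → Euc d :=
    fun wz => ∑ i, wz.1 i • wz.2 i with hT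
  set D : Set ((Fin (d+1) → ℝ) × (Fin (d+1) → Euc d)) :=
    stdSimplex ℝ (Fin (d+1)) ×ˢ Set.univ.pi (fun _ => s) with hD
  have hDcomp : IsCompact D := (isCompact_stdSimplex ℝ _).prod (isCompact_univ_pi fun _ => hK)
  have hTcont : Continuous T :=
    continuous_finset_sum _ fun i _ =>
      (((continuous_apply i).comp continuous_fst).smul ((continuous_apply i).comp continuous_snd))
  have himg : convexHull ℝ s = T '' D := by
    apply Subset.antisymm
    · intro x hx
      obtain ⟨ι, hfin, z, w, hzs, hai, hwpos, hwsum, hxx⟩ :=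
        eq_pos_convex_span_of_mem_convexHull hx
      have hne : Nonempty ι := by
        rcases isEmpty_or_nonempty ι with h | h
        · simp [Finset.univ_eq_empty] at hwsum
        · exact h
      obtain ⟨i₀⟩ := hne
      have hcard : Fintype.card ι ≤ Fintype.card (Fin (d+1)) := by
        have h1 := hai.card_le_finrank_succ
        have h2 := Submodule.finrank_le (vectorSpan ℝ (Set.range z))
        simp only [finrank_euclideanSpace_fin] at h2
        simp only [Fintype.card_fin]
        omega
      obtain ⟨e⟩ : Nonempty (ι ↪ Fin (d+1)) := Function.Embedding.nonempty_of_card_le hcard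
      set w' : Fin (d+1) → ℝ := Function.extend e w (fun _ => 0) with hw'
      set z' : Fin (d+1) → Euc d := Function.extend e z (fun _ => z i₀) with hz'
      refine ⟨(w', z'), ⟨⟨?_, ?_⟩, ?_⟩, ?_⟩
      · intro j
        show (0:ℝ) ≤ w' j
        by_cases h : ∃ i, e i = j
        · obtain ⟨i, rfl⟩ := h
          rw [hw', e.injective.extend_apply]; exact (hwpos i).le
        · rw [hw', Function.extend_apply' w (fun _ => 0) j h]
      · show ∑ j, w' j = 1
        rw [hw', sum_extend_zero e w]; exact hwsum
      · intro j _
        show z' j ∈ s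
        by_cases h : ∃ i, e i = j
        · obtain ⟨i, rfl⟩ := h
          rw [hz', e.injective.extend_apply]; exact hzs ⟨i, rfl⟩
        · rw [hz', Function.extend_apply' z (fun _ => z i₀) j h]; exact hzs ⟨i₀, rfl⟩
      · have hpt : ∀ j, w' j • z' j = Function.extend e (fun i => w i • z i) (fun _ => 0) j := by
          intro j
          by_cases h : ∃ i, e i = j
          · obtain ⟨i, rfl⟩ := h
            rw [hw', hz', e.injective.extend_apply, e.injective.extend_apply,
              e.injective.extend_apply]
          · rw [hw', hz', Function.extend_apply' w (fun _ => 0) j h,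
              Function.extend_apply' z _ j h,
              Function.extend_apply' (fun i => w i • z i) (fun _ => 0) j h]
            simp
        calc T (w', z') = ∑ j, Function.extend e (fun i => w i • z i) (fun _ => 0) j :=
              Finset.sum_congr rfl fun j _ => hpt j
          _ = ∑ i, w i • z i := sum_extend_zero e _
          _ = x := hxx
    · rintro _ ⟨⟨w, z⟩, ⟨hw, hz⟩, rfl⟩
      exact (convex_convexHull ℝ s).sum_mem (fun i _ => hw.1 i) hw.2
        (fun i _ => subset_convexHull ℝ s (hz i (mem_univ i)))
  rw [himg]
  exact hDcomp.image hTcont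

-- helper 4 : existence of a subgradient at an interior point
lemma exists_subgrad {d : ℕ} {Ω : Set (Euc d)} (hop : IsOpen Ω) (hcv : Convex ℝ Ω)
    {u : Euc d → ℝ} (hu : ConvexOn ℝ Ω u) {x₀ : Euc d} (hx₀ : x₀ ∈ Ω) :
    ∃ q, q ∈ subdiff Ω u x₀ := by
  have ucont : ContinuousOn u Ω := hu.continuousOn hop
  set S : Set (Euc d × ℝ) := {p | p.1 ∈ Ω ∧ u p.1 < p.2} with hS
  have Sopen : IsOpen S := by
    rw [isOpen_iff_mem_nhds]
    rintro ⟨y, t⟩ ⟨hy, hlt⟩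
    have hcy : ContinuousAt u y := ucont.continuousAt (hop.mem_nhds hy)
    have hg : ContinuousAt (fun p : Euc d × ℝ => p.2 - u p.1) (y, t) :=
      continuous_snd.continuousAt.sub (hcy.comp continuous_fst.continuousAt)
    have h1 : ∀ᶠ p : Euc d × ℝ in 𝓝 (y, t), p.2 - u p.1 ∈ Ioi (0:ℝ) :=
      hg (Ioi_mem_nhds (by simpa using sub_pos.mpr hlt))
    have h2 : ∀ᶠ p : Euc d × ℝ in 𝓝 (y, t), p.1 ∈ Ω :=
      continuous_fst.continuousAt (hop.mem_nhds hy)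
    filter_upwards [h1, h2] with p hp1 hp2
    exact ⟨hp2, by simpa [sub_pos] using hp1⟩
  have Sconv : Convex ℝ S := by
    rintro ⟨y1, t1⟩ ⟨hy1, ht1⟩ ⟨y2, t2⟩ ⟨hy2, ht2⟩ a b ha hb hab
    refine ⟨hcv hy1 hy2 ha hb hab, ?_⟩
    have key : u (a • y1 + b • y2) ≤ a * u y1 + b * u y2 := by
      simpa using hu.2 hy1 hy2 ha hb hab
    have h1 : a * u y1 ≤ a * t1 := mul_le_mul_of_nonneg_left ht1.le ha
    have h2 : b * u y2 ≤ b * t2 := mul_le_mul_of_nonneg_left ht2.le hb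
    rcases eq_or_lt_of_le ha with ha0 | ha0
    · have hb1 : b = 1 := by linarith
      have h2' : b * u y2 < b * t2 := by rw [hb1]; simpa using ht2
      simp only [Prod.smul_mk, Prod.mk_add_mk, smul_eq_mul]
      calc u (a • y1 + b • y2) ≤ a * u y1 + b * u y2 := key
        _ < a * t1 + b * t2 := by
            rcases ha0 with rfl; simp only [zero_mul, zero_add]; exact h2'
    · have h1' : a * u y1 < a * t1 := mul_lt_mul_of_pos_left ht1 ha0
      simp only [Prod.smul_mk, Prod.mk_add_mk, smul_eq_mul]
      calc u (a • y1 + b • y2) ≤ a * u y1 + b * u y2 := key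
        _ < a * t1 + b * t2 := add_lt_add_of_lt_of_le h1' h2
  have hx₀S : (x₀, u x₀) ∉ S := fun h => lt_irrefl _ h.2
  obtain ⟨f, hf⟩ := geometric_hahn_banach_open_point Sconv Sopen hx₀S
  set c : ℝ := f (0, 1) with hc
  have hfsplit : ∀ (y : Euc d) (t : ℝ), f (y, t) = f (y, 0) + t * c := by
    intro y t
    have : (y, t) = (y, (0:ℝ)) + t • ((0:Euc d), (1:ℝ)) := by
      simp [Prod.ext_iff]
    rw [this, map_add, f.map_smul, smul_eq_mul]
  have hcneg : c < 0 := by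
    have h1 : f (x₀, u x₀ + 1) < f (x₀, u x₀) := hf _ ⟨hx₀, by simp⟩
    rw [hfsplit x₀ (u x₀ + 1), hfsplit x₀ (u x₀)] at h1
    linarith
  have hkey : ∀ y ∈ Ω, f (y, 0) + u y * c ≤ f (x₀, 0) + u x₀ * c := by
    intro y hy
    apply le_of_forall_pos_le_add
    intro ε hε
    have hε' : (0:ℝ) < ε / (-c) := div_pos hε (by linarith)
    have h1 : f (y, u y + ε / (-c)) < f (x₀, u x₀) := hf _ ⟨hy, by simp; linarith⟩
    rw [hfsplit y (u y + ε / (-c)), hfsplit x₀ (u x₀)] at h1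
    have hc0 : c ≠ 0 := by linarith
    have h2 : (ε / (-c)) * c = -ε := by
      rw [div_mul_eq_mul_div, div_neg, mul_div_assoc, div_self hc0, mul_one]
    have h3 : (u y + ε / (-c)) * c = u y * c + -ε := by rw [add_mul, h2]
    linarith
  set g : Euc d →L[ℝ] ℝ := f.comp (ContinuousLinearMap.inl ℝ (Euc d) ℝ) with hg
  have hgapp : ∀ y, g y = f (y, 0) := fun y => rfl
  refine ⟨(InnerProductSpace.toDual ℝ (Euc d)).symm ((-c)⁻¹ • g), ?_⟩
  intro z hz
  have hinner : (inner ℝ ((InnerProductSpace.toDual ℝ (Euc d)).symm ((-c)⁻¹ • g)) (z - x₀) : ℝ)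
      = (-c)⁻¹ * (f (z, 0) - f (x₀, 0)) := by
    rw [InnerProductSpace.toDual_symm_apply]
    simp [hgapp, map_sub, mul_sub]
  rw [hinner]
  have H := hkey z hz
  have hcpos : (0:ℝ) < -c := by linarith
  have h4 : f (z, 0) - f (x₀, 0) ≤ (-c) * (u z - u x₀) := by nlinarith [H]
  have h5 := mul_le_mul_of_nonneg_left h4 (le_of_lt (inv_pos.mpr hcpos))
  have h6 : (-c)⁻¹ * ((-c) * (u z - u x₀)) = u z - u x₀ := by
    rw [← mul_assoc, inv_mul_cancel₀ (by linarith : (-c) ≠ (0:ℝ)), one_mul]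
  linarith

-- main theorem parts as standalone lemmas
lemma part1 {d : ℕ} (Ω : Set (Euc d)) (hbd : Bornology.IsBounded Ω)
    (u : Euc d → ℝ) (M : ℝ) (hM : ∀ x ∈ Ω, |u x| ≤ M) :
    closure (subdiffSet Ω u Ω) ⊆ chiSubSet Ω u (closure Ω) := by
  intro p hp
  obtain ⟨P, hPmem, hPtend⟩ := mem_closure_iff_seq_limit.mp hp
  have hPex : ∀ n, ∃ y, y ∈ Ω ∧ P n ∈ subdiff Ω u y := by
    intro n
    have := hPmem n
    simpa [subdiffSet, mem_iUnion] using this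
  choose X hXΩ hXq using hPex
  have hcomp : IsCompact (closure Ω) :=
    Metric.isCompact_of_isClosed_isBounded isClosed_closure hbd.closure
  obtain ⟨x, hxcl, φ, hφ, hXtend⟩ := hcomp.tendsto_subseq (fun n => subset_closure (hXΩ n))
  obtain ⟨L, -, ψ, hψ, hLtend⟩ := (isCompact_Icc (a := -M) (b := M)).tendsto_subseq
    (x := fun n => u (X (φ n))) (fun n => abs_le.mp (hM _ (hXΩ (φ n))))
  set Y : ℕ → Euc d := fun k => X (φ (ψ k)) with hY
  set Q : ℕ → Euc d := fun k => P (φ (ψ k)) with hQ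
  have hYtend : Tendsto Y atTop (𝓝 x) := hXtend.comp hψ.tendsto_atTop
  have hQtend : Tendsto Q atTop (𝓝 p) := hPtend.comp ((hφ.comp hψ).tendsto_atTop)
  have hLtend' : Tendsto (fun k => u (Y k)) atTop (𝓝 L) := hLtend
  have hmem : p ∈ chiSub Ω u x := by
    intro z
    have hA : extFun Ω u x ≤ (L : EReal) := by
      apply iSup_le; intro y; apply iSup_le; intro hy
      apply iSup_le; intro q; apply iSup_le; intro hq
      rw [EReal.coe_le_coe_iff]
      refine le_of_tendsto_of_tendsto' ?_ hLtend' (fun k => hq (Y k) (hXΩ _))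
      exact tendsto_const_nhds.add (Filter.Tendsto.inner tendsto_const_nhds
        (hYtend.sub tendsto_const_nhds))
    have hB : (L : EReal) + (((inner ℝ p (z - x) : ℝ) : ℝ) : EReal) ≤ extFun Ω u z := by
      have htend : Tendsto (fun k => u (Y k) + (inner ℝ (Q k) (z - Y k) : ℝ)) atTop
          (𝓝 (L + (inner ℝ p (z - x) : ℝ))) :=
        hLtend'.add (Filter.Tendsto.inner hQtend (tendsto_const_nhds.sub hYtend))
      rw [← EReal.coe_add]
      refine le_of_tendsto (EReal.tendsto_coe.mpr htend) (Filter.Eventually.of_forall fun k => ?_)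
      exact le_extFun (hXΩ (φ (ψ k))) (hXq (φ (ψ k))) z
    calc extFun Ω u x + (((inner ℝ p (z - x) : ℝ) : ℝ) : EReal)
        ≤ (L : EReal) + (((inner ℝ p (z - x) : ℝ) : ℝ) : EReal) := add_le_add_left hA _
      _ ≤ extFun Ω u z := hB
  show p ∈ ⋃ x ∈ closure Ω, chiSub Ω u x
  exact mem_iUnion₂.mpr ⟨x, hxcl, hmem⟩

lemma part3 {d : ℕ} (Ω : Set (Euc d))
    (hne : Ω.Nonempty) (hbd : Bornology.IsBounded Ω) (hop : IsOpen Ω) (hcv : Convex ℝ Ω)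
    (u : Euc d → ℝ) (hu : ConvexOn ℝ Ω u) (M : ℝ) (hM : ∀ x ∈ Ω, |u x| ≤ M)
    (hsb : Bornology.IsBounded (subdiffSet Ω u Ω)) :
    chiSubSet Ω u Set.univ ⊆ convexHull ℝ (closure (subdiffSet Ω u Ω)) := by
  intro p hp
  simp only [chiSubSet, mem_iUnion] at hp
  obtain ⟨x, -, hpx⟩ := hp
  by_contra hK
  have hcomp : IsCompact (closure (subdiffSet Ω u Ω)) :=
    Metric.isCompact_of_isClosed_isBounded isClosed_closure hsb.closure
  have hhull : IsCompact (convexHull ℝ (closure (subdiffSet Ω u Ω))) := isCompact_convexHull' hcomp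
  obtain ⟨f, c, hc1, hc2⟩ :=
    geometric_hahn_banach_closed_point (convex_convexHull ℝ _) hhull.isClosed hK
  set v := (InnerProductSpace.toDual ℝ (Euc d)).symm f with hv
  have hvf : ∀ w : Euc d, (inner ℝ v w : ℝ) = f w := fun w => InnerProductSpace.toDual_symm_apply
  obtain ⟨R, hR⟩ := hbd.exists_norm_le
  obtain ⟨Qb, hQb⟩ := hsb.exists_norm_le
  obtain ⟨y₀, hy₀⟩ := hne
  obtain ⟨q₀, hq₀⟩ := exists_subgrad hop hcv hu hy₀
  set r₀ : ℝ := u y₀ + (inner ℝ q₀ (x - y₀) : ℝ) with hr₀def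
  have hr₀ : (r₀ : EReal) ≤ extFun Ω u x := le_extFun hy₀ hq₀ x
  set C : ℝ := M + Qb * (‖x‖ + R) with hC
  have hsub : ∀ q ∈ subdiffSet Ω u Ω, f q < c :=
    fun q hq => hc1 q (subset_convexHull ℝ _ (subset_closure hq))
  have hup : ∀ t : ℝ, 0 ≤ t → extFun Ω u (x + t • v) ≤ ((C + t * c : ℝ) : EReal) := by
    intro t ht
    apply iSup_le; intro y; apply iSup_le; intro hy
    apply iSup_le; intro q; apply iSup_le; intro hq
    rw [EReal.coe_le_coe_iff]
    have hqmem : q ∈ subdiffSet Ω u Ω := by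
      simp only [subdiffSet, mem_iUnion]; exact ⟨y, hy, hq⟩
    have hinner : (inner ℝ q (x + t • v - y) : ℝ)
        = (inner ℝ q (x - y) : ℝ) + t * (inner ℝ q v : ℝ) := by
      rw [add_sub_right_comm, inner_add_right, real_inner_smul_right]
    have h1 : u y ≤ M := (abs_le.mp (hM y hy)).2
    have h2 : (inner ℝ q (x - y) : ℝ) ≤ Qb * (‖x‖ + R) := by
      calc (inner ℝ q (x - y) : ℝ) ≤ ‖q‖ * ‖x - y‖ := real_inner_le_norm q (x - y)
        _ ≤ Qb * (‖x‖ + R) := by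
            apply mul_le_mul (hQb q hqmem) ?_ (norm_nonneg _) ((norm_nonneg q).trans (hQb q hqmem))
            calc ‖x - y‖ ≤ ‖x‖ + ‖y‖ := norm_sub_le x y
              _ ≤ ‖x‖ + R := by linarith [hR y hy]
    have h3 : t * (inner ℝ q v : ℝ) ≤ t * c := by
      apply mul_le_mul_of_nonneg_left ?_ ht
      rw [real_inner_comm, hvf]
      exact (hsub q hqmem).le
    rw [hinner]
    linarith
  have hδ : 0 < f p - c := by linarith
  set t : ℝ := (|C - r₀| + 1) / (f p - c) with htdef
  have ht : 0 ≤ t := div_nonneg (by positivity) hδ.le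
  have hchain := hpx (x + t • v)
  have hzx : (inner ℝ p (x + t • v - x) : ℝ) = t * f p := by
    rw [add_sub_cancel_left, real_inner_smul_right, real_inner_comm, hvf]
  have hfin : (r₀ : EReal) + ((t * f p : ℝ) : EReal) ≤ ((C + t * c : ℝ) : EReal) := by
    calc (r₀ : EReal) + ((t * f p : ℝ) : EReal)
        ≤ extFun Ω u x + ((t * f p : ℝ) : EReal) := add_le_add_left hr₀ _
      _ = extFun Ω u x + (((inner ℝ p (x + t • v - x) : ℝ) : ℝ) : EReal) := by rw [hzx]
      _ ≤ extFun Ω u (x + t • v) := hchain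
      _ ≤ _ := hup t ht
  rw [← EReal.coe_add, EReal.coe_le_coe_iff] at hfin
  have htmul : t * (f p - c) = |C - r₀| + 1 := div_mul_cancel₀ _ hδ.ne'
  have h9 : t * (f p - c) ≤ C - r₀ := by nlinarith [hfin]
  linarith [le_abs_self (C - r₀), htmul, h9]


/-- if `u` is convex and bounded on `Ω` and `Ω* = ∂u(Ω)` is bounded, then
`closure Ω* ⊆ χ_u(closure Ω) ⊆ χ_u(ℝ^d) ⊆ convexHull ℝ (closure Ω*)`. -/
theorem statement1 {d : ℕ} (hd : 1 ≤ d) (Ω : Set (Euc d))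
    (hne : Ω.Nonempty) (hbd : Bornology.IsBounded Ω) (hop : IsOpen Ω) (hcv : Convex ℝ Ω)
    (u : Euc d → ℝ) (hu : ConvexOn ℝ Ω u)
    (hub : ∃ M : ℝ, ∀ x ∈ Ω, |u x| ≤ M)
    (hsb : Bornology.IsBounded (subdiffSet Ω u Ω)) :
    closure (subdiffSet Ω u Ω) ⊆ chiSubSet Ω u (closure Ω) ∧
    chiSubSet Ω u (closure Ω) ⊆ chiSubSet Ω u Set.univ ∧
    chiSubSet Ω u Set.univ ⊆ convexHull ℝ (closure (subdiffSet Ω u Ω)) := by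
  obtain ⟨M, hM⟩ := hub
  refine ⟨part1 Ω hbd u M hM, ?_, part3 Ω hne hbd hop hcv u hu M hM hsb⟩
  intro p hp
  simp only [chiSubSet, mem_iUnion] at hp ⊢
  obtain ⟨x, -, h⟩ := hp
  exact ⟨x, mem_univ x, h⟩

end
end

section
/- Let u_h be a mesh function, let x ∈ conv(N_h), and let p ∈ ∂Γ(u_h)(x). Then there exists y ∈ N_h such that u_h(y) = Γ(u_h)(y) and p ∈ ∂Γ(u_h)(x) ∩ ∂Γ(u_h)(y). -/
open Set MeasureTheory Filter Topology

noncomputable section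

lemma coord_abs_le_norm {d : ℕ} (x : Euc d) (i : Fin d) : |x i| ≤ ‖x‖ := by
  rw [EuclideanSpace.norm_eq]
  have h1 : |x i| = Real.sqrt (‖x i‖ ^ 2) := by
    rw [Real.sqrt_sq_eq_abs]; simp [abs_abs, Real.norm_eq_abs]
  rw [h1]
  apply Real.sqrt_le_sqrt
  exact Finset.single_le_sum (f := fun j => ‖x j‖ ^ 2) (fun j _ => sq_nonneg _)
    (Finset.mem_univ i)

lemma latt_bounded_finite {d : ℕ} {h : ℝ} (hh : 0 < h) {S : Set (Euc d)}
    (hS : Bornology.IsBounded S) : (S ∩ latt d h).Finite := by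
  obtain ⟨R, hR⟩ := hS.subset_closedBall 0
  set M : ℤ := ⌈R / h⌉ with hM
  apply Set.Finite.of_finite_image (f := fun x : Euc d => fun i => ⌊x i / h⌋)
  · apply Set.Finite.subset
      (Set.Finite.pi (fun i : Fin d => Set.finite_Icc (-M) M))
    rintro _ ⟨x, ⟨hxS, hxl⟩, rfl⟩
    intro i _
    obtain ⟨m, hm⟩ := hxl i
    have hxi : x i / h = m := by rw [hm]; field_simp
    have hfloor : ⌊x i / h⌋ = m := by rw [hxi]; exact Int.floor_intCast m
    have hnorm : ‖x‖ ≤ R := by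
      have := hR hxS
      simpa [Metric.mem_closedBall, dist_eq_norm] using this
    have habs : |(m : ℝ)| * h ≤ R := by
      have h1 : |(m : ℝ) * h| ≤ R := by
        rw [← hm]
        exact le_trans (coord_abs_le_norm x i) hnorm
      rwa [abs_mul, abs_of_pos hh] at h1
    have h2 : |(m : ℝ)| ≤ R / h := (le_div_iff₀ hh).mpr habs
    have h3 : |(m : ℝ)| ≤ (M : ℝ) := le_trans h2 (Int.le_ceil _)
    have h4 : |m| ≤ M := by exact_mod_cast (show ((|m|:ℤ):ℝ) ≤ ((M:ℤ):ℝ) from by rwa [← Int.cast_abs] at h3)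
    simp only [hfloor, Set.mem_Icc]
    exact abs_le.mp h4
  · intro x ⟨_, hxl⟩ y ⟨_, hyl⟩ hxy
    ext i
    obtain ⟨m, hm⟩ := hxl i
    obtain ⟨n, hn⟩ := hyl i
    have hx' : ⌊x i / h⌋ = m := by
      rw [show x i / h = m by rw [hm]; field_simp]; exact Int.floor_intCast m
    have hy' : ⌊y i / h⌋ = n := by
      rw [show y i / h = n by rw [hn]; field_simp]; exact Int.floor_intCast n
    have : m = n := by
      have := congrFun hxy i
      simp only [hx', hy'] at this; exact this
    rw [hm, hn, this]

/-- for a mesh function `u_h`, `x ∈ conv(N_h)` and `p ∈ ∂Γ(u_h)(x)`, there is a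
node `y ∈ N_h` with `u_h(y) = Γ(u_h)(y)` and `p ∈ ∂Γ(u_h)(x) ∩ ∂Γ(u_h)(y)`. -/
theorem statement4 {d : ℕ} (hd : 1 ≤ d) (Ω : Set (Euc d))
    (hne : Ω.Nonempty) (hbd : Bornology.IsBounded Ω) (hop : IsOpen Ω) (hcv : Convex ℝ Ω)
    (h : ℝ) (hh : 0 < h)
    (B : Set (Euc d)) (hBfin : B.Finite) (hBbd : B ⊆ frontier Ω)
    (u : Euc d → ℝ)
    (x : Euc d) (hx : x ∈ convexHull ℝ (meshΩ Ω h ∪ B))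
    (p : Euc d)
    (hp : p ∈ subdiff (convexHull ℝ (meshΩ Ω h ∪ B))
        (convEnv (meshΩ Ω h ∪ B) u) x) :
    ∃ y ∈ meshΩ Ω h ∪ B,
      u y = convEnv (meshΩ Ω h ∪ B) u y ∧
      p ∈ subdiff (convexHull ℝ (meshΩ Ω h ∪ B)) (convEnv (meshΩ Ω h ∪ B) u) x ∩
          subdiff (convexHull ℝ (meshΩ Ω h ∪ B)) (convEnv (meshΩ Ω h ∪ B) u) y := by
  classical
  set N := meshΩ Ω h ∪ B with hN
  set Γ := convEnv N u with hΓ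
  -- N is finite
  have hNfin : N.Finite := (latt_bounded_finite hh hbd).union hBfin
  -- N is nonempty (else convexHull is empty, contradicting hx)
  have hNne : N.Nonempty := by
    by_contra hne'
    rw [Set.not_nonempty_iff_eq_empty] at hne'
    rw [hne', convexHull_empty] at hx
    exact hx
  set Nf : Finset (Euc d) := hNfin.toFinset with hNf
  have hNfne : Nf.Nonempty := by
    rwa [hNf, Set.Finite.toFinset_nonempty]
  have hmemNf : ∀ y, y ∈ Nf ↔ y ∈ N := fun y => hNfin.mem_toFinset
  -- min of u over N
  obtain ⟨cmin, hcminNf⟩ := Nf.exists_min_image u hNfne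
  -- the admissible set at any point z
  set Sset : Euc d → Set ℝ := fun z => {t | ∃ (q : Euc d) (c : ℝ),
    (∀ y ∈ N, (inner ℝ q y : ℝ) + c ≤ u y) ∧ t = (inner ℝ q z : ℝ) + c} with hSset
  have hSne : ∀ z, (Sset z).Nonempty := by
    intro z
    refine ⟨(inner ℝ (0 : Euc d) z : ℝ) + u cmin, 0, u cmin, fun y hy => ?_, rfl⟩
    simp only [inner_zero_left, zero_add]
    exact hcminNf.2 y ((hmemNf y).mpr hy)
  -- max of u over N for upper bounds
  obtain ⟨cmax, hcmaxNf⟩ := Nf.exists_max_image u hNfne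
  have hSbdd : ∀ z ∈ convexHull ℝ N, BddAbove (Sset z) := by
    intro z hz
    refine ⟨u cmax, ?_⟩
    rintro t ⟨q, c, hqc, rfl⟩
    have hhalf : convexHull ℝ N ⊆ {w : Euc d | (inner ℝ q w : ℝ) ≤ u cmax - c} := by
      apply convexHull_min
      · intro y hy
        have h1 := hqc y hy
        have h2 : u y ≤ u cmax := hcmaxNf.2 y ((hmemNf y).mpr hy)
        simp only [Set.mem_setOf_eq]; linarith
      · exact convex_halfSpace_le (innerSL ℝ q).isLinear _
    have := hhalf hz
    simp only [Set.mem_setOf_eq] at this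
    linarith
  -- Γ ≤ u on N
  have hΓle : ∀ y ∈ N, Γ y ≤ u y := by
    intro y hy
    apply csSup_le (hSne y)
    rintro t ⟨q, c, hqc, rfl⟩
    exact hqc y hy
  -- admissible affine minorants are below Γ on the hull
  have hleΓ : ∀ z ∈ convexHull ℝ N, ∀ t ∈ Sset z, t ≤ Γ z := by
    intro z hz t ht
    exact le_csSup (hSbdd z hz) ht
  -- the minimizer of f y = u y - (Γ x + ⟨p, y - x⟩)
  obtain ⟨y₀, hy₀Nf, hy₀min⟩ :=
    Nf.exists_min_image (fun y => u y - (Γ x + (inner ℝ p (y - x) : ℝ))) hNfne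
  have hy₀N : y₀ ∈ N := (hmemNf y₀).mp hy₀Nf
  set m := u y₀ - (Γ x + (inner ℝ p (y₀ - x) : ℝ)) with hm
  -- admissibility of shifted supporting plane
  have hadm : ∀ y ∈ N, (inner ℝ p y : ℝ) + (Γ x - (inner ℝ p x : ℝ) + m) ≤ u y := by
    intro y hy
    have h1 := hy₀min y ((hmemNf y).mpr hy)
    have h2 : (inner ℝ p (y - x) : ℝ) = (inner ℝ p y : ℝ) - (inner ℝ p x : ℝ) :=
      inner_sub_right p y x
    rw [inner_sub_right] at h1
    linarith
  have hkey : ∀ z ∈ convexHull ℝ N, Γ x + (inner ℝ p (z - x) : ℝ) + m ≤ Γ z := by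
    intro z hz
    have := hleΓ z hz ((inner ℝ p z : ℝ) + (Γ x - (inner ℝ p x : ℝ) + m))
      ⟨p, Γ x - (inner ℝ p x : ℝ) + m, hadm, rfl⟩
    rw [inner_sub_right]
    linarith
  have hy₀hull : y₀ ∈ convexHull ℝ N := subset_convexHull ℝ N hy₀N
  -- u y₀ = Γ y₀
  have heq : u y₀ = Γ y₀ := by
    have h1 := hkey y₀ hy₀hull
    have h2 := hΓle y₀ hy₀N
    have h3 : Γ x + (inner ℝ p (y₀ - x) : ℝ) + m = u y₀ := by rw [hm]; ring
    linarith
  refine ⟨y₀, hy₀N, heq, hp, ?_⟩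
  -- p ∈ ∂Γ(y₀)
  intro z hz
  have h1 := hkey z hz
  have h2 : (inner ℝ p (z - y₀) : ℝ) = (inner ℝ p (z - x) : ℝ) - (inner ℝ p (y₀ - x) : ℝ) := by
    rw [inner_sub_right, inner_sub_right, inner_sub_right]; ring
  have h3 : Γ y₀ + (inner ℝ p (z - y₀) : ℝ) = Γ x + (inner ℝ p (z - x) : ℝ) + m := by
    rw [← heq, h2, hm]; ring
  rw [h3]
  exact h1


end
end

section
/- Let u_h be a mesh function and E ⊆ interior(conv(N_h)). Then ∂_h u_h(E) ⊆ ∂Γ(u_h)(E) := ⋃_{x∈E} ∂Γ(u_h)(x), the set ∂Γ(u_h)(E) \ ∂_h u_h(E) has d-dimensional Lebesgue measure zero, and consequently ω(R,u_h,E) = ω(R,Γ(u_h),E) for every locally integrable R : ℝ^d → [0,∞). -/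
open Set MeasureTheory Filter Topology

noncomputable section

section MyAux

variable {d : ℕ} {N : Set (Euc d)} {u : Euc d → ℝ}

def envSet {d : ℕ} (N : Set (Euc d)) (u : Euc d → ℝ) (x : Euc d) : Set ℝ :=
  {t | ∃ (p : Euc d) (c : ℝ),
    (∀ y ∈ N, (inner ℝ p y : ℝ) + c ≤ u y) ∧ t = (inner ℝ p x : ℝ) + c}

lemma convEnv_def (x : Euc d) : convEnv N u x = sSup (envSet N u x) := rfl

lemma envSet_nonempty (hfin : N.Finite) (hne : N.Nonempty) (x : Euc d) :
    (envSet N u x).Nonempty := by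
  refine ⟨(inner ℝ (0 : Euc d) x : ℝ) + sInf (u '' N), 0, sInf (u '' N), fun y hy => ?_, rfl⟩
  have : sInf (u '' N) ≤ u y := csInf_le (hfin.image u).bddBelow ⟨y, hy, rfl⟩
  simpa [inner_zero_left] using this

lemma envSet_bddAbove (hfin : N.Finite) {x : Euc d} (hx : x ∈ convexHull ℝ N) :
    BddAbove (envSet N u x) := by
  refine ⟨sSup (u '' N), ?_⟩
  rintro t ⟨p, c, hpc, rfl⟩
  have hcf : ConvexOn ℝ (univ : Set (Euc d)) (fun z => (inner ℝ p z : ℝ) + c) := by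
    refine ⟨convex_univ, fun z _ w _ a b ha hb hab => ?_⟩
    have h1 : a • ((inner ℝ p z : ℝ) + c) + b • ((inner ℝ p w : ℝ) + c)
        = (inner ℝ p (a • z + b • w) : ℝ) + c := by
      simp only [smul_eq_mul, inner_add_right, real_inner_smul_right]
      linear_combination c * hab
    exact le_of_eq h1.symm
  obtain ⟨y, hyN, hle⟩ := hcf.exists_ge_of_mem_convexHull (subset_univ N) hx
  exact hle.trans ((hpc y hyN).trans (le_csSup (hfin.image u).bddAbove ⟨y, hyN, rfl⟩))

lemma le_convEnv {p : Euc d} {c : ℝ} (hpc : ∀ y ∈ N, (inner ℝ p y : ℝ) + c ≤ u y)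
    (hfin : N.Finite) {x : Euc d} (hx : x ∈ convexHull ℝ N) :
    (inner ℝ p x : ℝ) + c ≤ convEnv N u x :=
  le_csSup (envSet_bddAbove hfin hx) ⟨p, c, hpc, rfl⟩

lemma convEnv_le (hfin : N.Finite) (hne : N.Nonempty) {y : Euc d} (hy : y ∈ N) :
    convEnv N u y ≤ u y :=
  csSup_le (envSet_nonempty hfin hne y) (by rintro t ⟨p, c, hpc, rfl⟩; exact hpc y hy)

lemma sInf_le_convEnv (hfin : N.Finite) {x : Euc d} (hx : x ∈ convexHull ℝ N) :
    sInf (u '' N) ≤ convEnv N u x := by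
  have hadm : ∀ y ∈ N, (inner ℝ (0 : Euc d) y : ℝ) + sInf (u '' N) ≤ u y := by
    intro y hy
    simpa [inner_zero_left] using csInf_le (hfin.image u).bddBelow ⟨y, hy, rfl⟩
  simpa [inner_zero_left] using le_convEnv hadm hfin hx

lemma convEnv_contact (hfin : N.Finite) {x p : Euc d} (hx : x ∈ convexHull ℝ N)
    (hp : p ∈ subdiff (convexHull ℝ N) (convEnv N u) x) :
    ∃ y ∈ N, convEnv N u y = u y ∧ p ∈ subdiff (convexHull ℝ N) (convEnv N u) y := by
  have hNne : N.Nonempty := convexHull_nonempty_iff.mp ⟨x, hx⟩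
  set Γ := convEnv N u with hΓ
  set c : ℝ := Γ x - (inner ℝ p x : ℝ) with hc
  have hsub : ∀ z ∈ convexHull ℝ N, Γ x + (inner ℝ p (z - x) : ℝ) ≤ Γ z := hp
  have hL : ∀ y ∈ N, (inner ℝ p y : ℝ) + c ≤ u y := by
    intro y hy
    have h1 := hsub y (subset_convexHull ℝ N hy)
    have h2 : Γ y ≤ u y := convEnv_le hfin hNne hy
    have h3 : (inner ℝ p (y - x) : ℝ) = (inner ℝ p y : ℝ) - (inner ℝ p x : ℝ) :=
      inner_sub_right _ _ _
    rw [hc]; linarith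
  by_cases hex : ∃ y ∈ N, (inner ℝ p y : ℝ) + c = u y
  · obtain ⟨y, hyN, hyeq⟩ := hex
    have hyΓ : Γ y = u y := le_antisymm (convEnv_le hfin hNne hyN)
      (by rw [← hyeq]; exact le_convEnv hL hfin (subset_convexHull ℝ N hyN))
    refine ⟨y, hyN, hyΓ, fun z hz => ?_⟩
    have h3 : (inner ℝ p z : ℝ) + c ≤ Γ z := le_convEnv hL hfin hz
    have h4 : (inner ℝ p (z - y) : ℝ) = (inner ℝ p z : ℝ) - (inner ℝ p y : ℝ) :=
      inner_sub_right _ _ _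
    rw [hyΓ, ← hyeq]; linarith
  · exfalso
    push_neg at hex
    have hlt : ∀ y ∈ N, (inner ℝ p y : ℝ) + c < u y := fun y hy => (hL y hy).lt_of_ne (hex y hy)
    set T : Set ℝ := (fun y => u y - ((inner ℝ p y : ℝ) + c)) '' N with hT
    have hTne : T.Nonempty := hNne.image _
    have hTfin : T.Finite := hfin.image _
    obtain ⟨y0, hy0, hy0eq⟩ := hTne.csInf_mem hTfin
    have hεpos : 0 < sInf T := by rw [← hy0eq]; exact sub_pos.mpr (hlt y0 hy0)
    have hL' : ∀ y ∈ N, (inner ℝ p y : ℝ) + (c + sInf T) ≤ u y := by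
      intro y hy
      have := csInf_le hTfin.bddBelow ⟨y, hy, rfl⟩
      dsimp only at this
      linarith
    have h5 := le_convEnv hL' hfin hx
    rw [hc] at h5
    linarith

end MyAux
section MyAux2

variable {d : ℕ}

lemma interior_closure_subset {Ω : Set (Euc d)} (hop : IsOpen Ω) (hcv : Convex ℝ Ω) :
    interior (closure Ω) ⊆ Ω := by
  intro x hx
  rcases Ω.eq_empty_or_nonempty with rfl | ⟨y, hy⟩
  · simp at hx
  by_cases hxy : x = y
  · exact hxy ▸ hy
  obtain ⟨ε, hε, hball⟩ := Metric.mem_nhds_iff.mp (mem_interior_iff_mem_nhds.mp hx)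
  have hxyn : (0:ℝ) < ‖x - y‖ := by
    rw [norm_pos_iff]; exact sub_ne_zero.mpr hxy
  set t : ℝ := ε / (2 * ‖x - y‖) with ht
  have htpos : 0 < t := div_pos hε (by positivity)
  set z : Euc d := x + t • (x - y) with hz
  have hzmem : z ∈ closure Ω := by
    apply hball
    have h1 : z - x = t • (x - y) := by rw [hz]; abel
    simp only [Metric.mem_ball, dist_eq_norm, h1, norm_smul, Real.norm_eq_abs,
      abs_of_pos htpos, ht]
    have heq : ε / (2 * ‖x - y‖) * ‖x - y‖ = ε / 2 := by
      field_simp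
    rw [abs_of_pos (div_pos hε (by positivity)), heq]
    linarith
  have hyint : y ∈ interior Ω := by rwa [hop.interior_eq]
  have hseg := hcv.openSegment_closure_interior_subset_interior hzmem hyint
  have h1t : (0:ℝ) < 1 + t := by linarith
  have hmem : x ∈ openSegment ℝ z y := by
    refine ⟨1/(1+t), t/(1+t), by positivity, by positivity, ?_, ?_⟩
    · field_simp
    · rw [hz]
      match_scalars <;> field_simp <;> ring
  have := hseg hmem
  rwa [hop.interior_eq] at this

lemma meshFinite {Ω : Set (Euc d)} (hbd : Bornology.IsBounded Ω) {h : ℝ} (hh : 0 < h) :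
    (meshΩ Ω h).Finite := by
  obtain ⟨C, hC⟩ := isBounded_iff_forall_norm_le.mp hbd
  set M : ℤ := ⌈C / h⌉ with hM
  have hfin : {m : Fin d → ℤ | ∀ i, m i ∈ Icc (-M) M}.Finite := by
    apply (Set.Finite.pi (fun _ : Fin d => Set.finite_Icc (-M) M)).subset
    intro m hm
    exact fun i _ => hm i
  apply (hfin.image (fun m : Fin d → ℤ => (WithLp.toLp 2 (fun i => ((m i : ℝ) * h)) : Euc d))).subset
  rintro x ⟨hxΩ, hlat⟩
  choose m hm using hlat
  refine ⟨m, fun i => ?_, ?_⟩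
  · have h2 := abs_real_inner_le_norm (EuclideanSpace.single i (1:ℝ)) x
    simp only [EuclideanSpace.inner_single_left, map_one, one_mul,
      EuclideanSpace.norm_single, norm_one] at h2
    have h3 : |(m i : ℝ)| * h ≤ C := by
      have heq : |(m i : ℝ)| * h = |x i| := by
        rw [hm i, abs_mul, abs_of_pos hh]
      rw [heq]; exact h2.trans (hC x hxΩ)
    have h4 : (|m i| : ℝ) ≤ C / h := by
      rw [le_div_iff₀ hh]; push_cast; exact h3
    have h5 : (|m i| : ℝ) ≤ (M : ℝ) := h4.trans (Int.le_ceil _)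
    have h6 : |m i| ≤ M := by exact_mod_cast h5
    rw [mem_Icc]; exact abs_le.mp h6
  · ext i
    exact (hm i).symm

end MyAux2
section MyAux3

variable {d : ℕ}

lemma singular_null {N : Set (Euc d)} (hfin : N.Finite) (hNne : N.Nonempty) (u : Euc d → ℝ) :
    volume {q : Euc d | ∃ x ∈ convexHull ℝ N, ∃ y ∈ convexHull ℝ N, x ≠ y ∧
      q ∈ subdiff (convexHull ℝ N) (convEnv N u) x ∧
      q ∈ subdiff (convexHull ℝ N) (convEnv N u) y} = 0 := by
  set K := convexHull ℝ N with hKdef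
  set Γ := convEnv N u with hΓdef
  have hKne : K.Nonempty := hNne.convexHull
  have hKbd : Bornology.IsBounded K := isBounded_convexHull.mpr hfin.isBounded
  obtain ⟨C, hC⟩ := isBounded_iff_forall_norm_le.mp hKbd
  set R : ℝ := max C 0 with hR
  have hR0 : 0 ≤ R := le_max_right _ _
  have hCK : ∀ z ∈ K, ‖z‖ ≤ R := fun z hz => (hC z hz).trans (le_max_left _ _)
  set g : Euc d → ℝ := fun q => sSup ((fun z => (inner ℝ q z : ℝ) - Γ z) '' K) with hg
  have himgne : ∀ q : Euc d, ((fun z => (inner ℝ q z : ℝ) - Γ z) '' K).Nonempty :=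
    fun q => hKne.image _
  have hbdd : ∀ q : Euc d, BddAbove ((fun z => (inner ℝ q z : ℝ) - Γ z) '' K) := by
    intro q
    refine ⟨‖q‖ * R - sInf (u '' N), ?_⟩
    rintro s ⟨z, hz, rfl⟩
    have h1 : (inner ℝ q z : ℝ) ≤ ‖q‖ * R :=
      (real_inner_le_norm q z).trans (mul_le_mul_of_nonneg_left (hCK z hz) (norm_nonneg q))
    have h2 : sInf (u '' N) ≤ Γ z := sInf_le_convEnv hfin hz
    simp only
    linarith
  have hgle : ∀ (q z : Euc d), z ∈ K → (inner ℝ q z : ℝ) - Γ z ≤ g q :=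
    fun q z hz => le_csSup (hbdd q) ⟨z, hz, rfl⟩
  have glip : LipschitzWith R.toNNReal g := by
    apply LipschitzWith.of_dist_le_mul
    intro q1 q2
    rw [Real.dist_eq, dist_eq_norm, Real.coe_toNNReal _ hR0, abs_sub_le_iff]
    have key : ∀ a b : Euc d, g a - g b ≤ R * ‖a - b‖ := by
      intro a b
      have hle : g a ≤ g b + R * ‖a - b‖ := by
        apply csSup_le (himgne a)
        rintro s ⟨z, hz, rfl⟩
        have h1 : (inner ℝ (a - b) z : ℝ) ≤ ‖a - b‖ * R :=
          (real_inner_le_norm _ _).trans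
            (mul_le_mul_of_nonneg_left (hCK z hz) (norm_nonneg _))
        have h2 := hgle b z hz
        have h3 : (inner ℝ a z : ℝ) = (inner ℝ b z : ℝ) + (inner ℝ (a - b) z : ℝ) := by
          rw [inner_sub_left]; ring
        simp only
        rw [mul_comm R]
        linarith
      linarith
    exact ⟨key q1 q2, by rw [norm_sub_rev] at *; exact key q2 q1⟩
  have hkey : ∀ (x q : Euc d), x ∈ K → q ∈ subdiff K Γ x → DifferentiableAt ℝ g q →
      ∀ v : Euc d, (fderiv ℝ g q) v = (inner ℝ v x : ℝ) := by
    intro x q hx hq hdiff v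
    have hq' : ∀ z ∈ K, Γ x + (inner ℝ q (z - x) : ℝ) ≤ Γ z := hq
    have hgq : g q = (inner ℝ q x : ℝ) - Γ x := by
      refine le_antisymm (csSup_le (himgne q) ?_) (hgle q x hx)
      rintro s ⟨z, hz, rfl⟩
      have h1 := hq' z hz
      have h3 : (inner ℝ q (z - x) : ℝ) = (inner ℝ q z : ℝ) - (inner ℝ q x : ℝ) :=
        inner_sub_right _ _ _
      simp only
      linarith
    have hlow : ∀ q' : Euc d, (inner ℝ q' x : ℝ) - Γ x ≤ g q' := fun q' => hgle q' x hx
    have hline : HasDerivAt (fun s : ℝ => q + s • v) v 0 := by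
      simpa using ((hasDerivAt_id (0:ℝ)).smul_const v).const_add q
    have h0 : q + (0:ℝ) • v = q := by simp
    have hψ : HasDerivAt (fun s : ℝ => g (q + s • v)) ((fderiv ℝ g q) v) 0 := by
      have hf : HasFDerivAt g (fderiv ℝ g q) ((fun s : ℝ => q + s • v) 0) := by
        rw [show (fun s : ℝ => q + s • v) 0 = q by simp]
        exact hdiff.hasFDerivAt
      exact hf.comp_hasDerivAt 0 hline
    have hψ2 : HasDerivAt (fun s : ℝ => g (q + s • v) - g q - s * (inner ℝ v x : ℝ))
        ((fderiv ℝ g q) v - (inner ℝ v x : ℝ)) 0 := by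
      exact (hψ.sub_const (g q)).sub (hasDerivAt_mul_const (x := (0:ℝ)) (inner ℝ v x : ℝ))
    have hmin : IsLocalMin (fun s : ℝ => g (q + s • v) - g q - s * (inner ℝ v x : ℝ)) 0 := by
      apply Filter.Eventually.mono (Filter.univ_mem)
      intro s _
      have h1 := hlow (q + s • v)
      have h2 : (inner ℝ (q + s • v) x : ℝ) = (inner ℝ q x : ℝ) + s * (inner ℝ v x : ℝ) := by
        rw [inner_add_left, real_inner_smul_left]
      simp only [zero_smul, add_zero, zero_mul, sub_self, sub_zero]
      linarith
    have hz := hmin.hasDerivAt_eq_zero hψ2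
    linarith [hz]
  apply measure_mono_null (t := {q : Euc d | ¬ DifferentiableAt ℝ g q})
  · rintro q ⟨x, hx, y, hy, hxy, hqx, hqy⟩
    intro hdiff
    apply hxy
    have h1 := hkey x q hx hqx hdiff
    have h2 := hkey y q hy hqy hdiff
    have h3 : ∀ v : Euc d, (inner ℝ v (x - y) : ℝ) = 0 := by
      intro v
      have := (h1 v).symm.trans (h2 v)
      rw [inner_sub_right]
      linarith
    have h4 := h3 (x - y)
    exact sub_eq_zero.mp (inner_self_eq_zero.mp h4)
  · have := glip.ae_differentiableAt (μ := volume)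
    exact this
end MyAux3

/-- for `E ⊆ interior (conv N_h)`, `∂_h u_h(E) ⊆ ∂Γ(u_h)(E)`, the difference
`∂Γ(u_h)(E) \ ∂_h u_h(E)` is Lebesgue-null, and hence `ω(R,u_h,E) = ω(R,Γ(u_h),E)` for every
locally integrable `R ≥ 0`. -/
theorem statement7 {d : ℕ} (hd : 1 ≤ d) (Ω : Set (Euc d))
    (hne : Ω.Nonempty) (hbd : Bornology.IsBounded Ω) (hop : IsOpen Ω) (hcv : Convex ℝ Ω)
    (h : ℝ) (hh : 0 < h)
    (B : Set (Euc d)) (hBfin : B.Finite) (hBbd : B ⊆ frontier Ω)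
    (u : Euc d → ℝ)
    (E : Set (Euc d)) (hE : E ⊆ interior (convexHull ℝ (meshΩ Ω h ∪ B))) :
    (⋃ x ∈ E ∩ latt d h, subdiff (meshΩ Ω h ∪ B) u x) ⊆
      (⋃ x ∈ E, subdiff (convexHull ℝ (meshΩ Ω h ∪ B)) (convEnv (meshΩ Ω h ∪ B) u) x) ∧
    volume ((⋃ x ∈ E, subdiff (convexHull ℝ (meshΩ Ω h ∪ B)) (convEnv (meshΩ Ω h ∪ B) u) x) \
      (⋃ x ∈ E ∩ latt d h, subdiff (meshΩ Ω h ∪ B) u x)) = 0 ∧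
    ∀ R : Euc d → ℝ, (∀ p, 0 ≤ R p) → LocallyIntegrable R volume →
      (∫ p in (⋃ x ∈ E ∩ latt d h, subdiff (meshΩ Ω h ∪ B) u x), R p) =
      (∫ p in (⋃ x ∈ E, subdiff (convexHull ℝ (meshΩ Ω h ∪ B))
          (convEnv (meshΩ Ω h ∪ B) u) x), R p) := by
  set N := meshΩ Ω h ∪ B with hNdef
  set K := convexHull ℝ N with hKdef
  set Γ := convEnv N u with hΓdef
  rcases E.eq_empty_or_nonempty with rfl | hEne
  · exact ⟨by simp, by simp, fun R _ _ => by simp⟩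
  have hNfin : N.Finite := (meshFinite hbd hh).union hBfin
  obtain ⟨x0, hx0⟩ := hEne
  have hNne : N.Nonempty := convexHull_nonempty_iff.mp ⟨x0, interior_subset (hE hx0)⟩
  have hclosΩ : K ⊆ closure Ω := by
    rw [hKdef]
    apply convexHull_min _ hcv.closure
    rintro z (⟨hz, _⟩ | hz)
    · exact subset_closure hz
    · exact (frontier_subset_closure) (hBbd hz)
  have hintΩ : interior K ⊆ Ω := fun z hz =>
    interior_closure_subset hop hcv (interior_mono hclosΩ hz)
  have part1 : (⋃ x ∈ E ∩ latt d h, subdiff N u x) ⊆ ⋃ x ∈ E, subdiff K Γ x := by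
    intro p hp
    simp only [mem_iUnion, exists_prop] at hp ⊢
    obtain ⟨x, ⟨hxE, hxlat⟩, hpx⟩ := hp
    have hxΩ : x ∈ Ω := hintΩ (hE hxE)
    have hxN : x ∈ N := Or.inl ⟨hxΩ, hxlat⟩
    refine ⟨x, hxE, ?_⟩
    intro z hz
    have hpx' : ∀ y ∈ N, u x + (inner ℝ p (y - x) : ℝ) ≤ u y := hpx
    have hadm : ∀ y ∈ N, (inner ℝ p y : ℝ) + (u x - (inner ℝ p x : ℝ)) ≤ u y := by
      intro y hy
      have h1 := hpx' y hy
      have h2 : (inner ℝ p (y - x) : ℝ) = (inner ℝ p y : ℝ) - (inner ℝ p x : ℝ) :=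
        inner_sub_right _ _ _
      linarith
    have h3 : (inner ℝ p z : ℝ) + (u x - (inner ℝ p x : ℝ)) ≤ Γ z := le_convEnv hadm hNfin hz
    have h4 : Γ x ≤ u x := convEnv_le hNfin hNne hxN
    have h5 : (inner ℝ p (z - x) : ℝ) = (inner ℝ p z : ℝ) - (inner ℝ p x : ℝ) :=
      inner_sub_right _ _ _
    show Γ x + (inner ℝ p (z - x) : ℝ) ≤ Γ z
    linarith
  have part2 : volume ((⋃ x ∈ E, subdiff K Γ x) \ (⋃ x ∈ E ∩ latt d h, subdiff N u x)) = 0 := by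
    apply measure_mono_null _ (singular_null hNfin hNne u)
    rintro p ⟨hp1, hp2⟩
    simp only [mem_iUnion, exists_prop] at hp1
    obtain ⟨x, hxE, hpx⟩ := hp1
    have hxK : x ∈ K := interior_subset (hE hxE)
    by_cases hex : ∃ y ∈ K, y ≠ x ∧ p ∈ subdiff K Γ y
    · obtain ⟨y, hyK, hyx, hpy⟩ := hex
      exact ⟨x, hxK, y, hyK, hyx.symm, hpx, hpy⟩
    · exfalso
      apply hp2
      push_neg at hex
      obtain ⟨y, hyN, hyΓ, hpy⟩ := convEnv_contact hNfin hxK hpx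
      have hyx : y = x := by
        by_contra hne2
        exact hex y (subset_convexHull ℝ N hyN) hne2 hpy
      subst hyx
      have hyΩ : y ∈ Ω := hintΩ (hE hxE)
      have hylat : y ∈ latt d h := by
        rcases hyN with ⟨_, hl⟩ | hB
        · exact hl
        · exfalso
          have hfr := hBbd hB
          rw [hop.frontier_eq] at hfr
          exact hfr.2 hyΩ
      simp only [mem_iUnion, exists_prop]
      refine ⟨y, ⟨hxE, hylat⟩, ?_⟩
      intro w hw
      have h1 : Γ y + (inner ℝ p (w - y) : ℝ) ≤ Γ w := hpy w (subset_convexHull ℝ N hw)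
      have h2 : Γ w ≤ u w := convEnv_le hNfin hNne hw
      show u y + (inner ℝ p (w - y) : ℝ) ≤ u w
      rw [← hyΓ]
      linarith
  refine ⟨part1, part2, ?_⟩
  intro R _ _
  apply setIntegral_congr_set
  rw [MeasureTheory.ae_eq_set]
  constructor
  · rw [Set.diff_eq_empty.mpr part1]
    exact measure_empty
  · exact part2

end
end
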